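/- Let ρ : ℝ^d → ℝ be a Schwartz function, ε ∈ (0,1), and Ψ_ε(η,m,l) := ρ(ε(η+m+l)) − ρ(ε(η+l)) − ρ(ε(η+m)) + ρ(ε η). Then there is a constant C = C(ρ) such that for all nonzero η, m, l ∈ ℤ^d: |η+l| · |η| · |Ψ_ε(η,m,l)| ≤ C |m|³ |l|³, uniformly in ε ∈ (0,1). -/

import Mathlib

noncomputable def znorm {d : ℕ} (k : Fin d → ℤ) : ℝ :=
  Real.sqrt (∑ i, ((k i : ℝ)) ^ 2)

noncomputable def toE {d : ℕ} (k : Fin d → ℤ) : EuclideanSpace ℝ (Fin d) :=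
  WithLp.toLp 2 (fun i => (k i : ℝ))

lemma znorm_eq {d : ℕ} (k : Fin d → ℤ) : znorm k = ‖toE k‖ := by
  rw [znorm, EuclideanSpace.norm_eq]
  congr 1
  exact Finset.sum_congr rfl fun i _ => by simp [toE, Real.norm_eq_abs, sq_abs]

lemma toE_add {d : ℕ} (a b : Fin d → ℤ) : toE (a + b) = toE a + toE b := by
  ext i
  show ((a i + b i : ℤ) : ℝ) = (a i : ℝ) + (b i : ℝ)
  push_cast; ring

lemma one_le_znorm {d : ℕ} {k : Fin d → ℤ} (hk : k ≠ 0) : 1 ≤ znorm k := by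
  obtain ⟨i, hi⟩ : ∃ i, k i ≠ 0 := by
    by_contra h; push_neg at h; exact hk (funext h)
  have h1 : (1 : ℝ) ≤ ((k i : ℝ)) ^ 2 := by
    have := Int.one_le_abs hi
    have : (1 : ℝ) ≤ |(k i : ℝ)| := by exact_mod_cast (by simpa using this)
    nlinarith [sq_abs ((k i : ℝ))]
  have h2 : (1 : ℝ) ≤ ∑ j, ((k j : ℝ)) ^ 2 :=
    h1.trans (Finset.single_le_sum (f := fun j => ((k j : ℝ))^2) (fun j _ => sq_nonneg _) (Finset.mem_univ i))
  rw [znorm]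
  calc (1:ℝ) = Real.sqrt 1 := (Real.sqrt_one).symm
    _ ≤ _ := Real.sqrt_le_sqrt h2

set_option maxHeartbeats 2000000 in
theorem stmt6 (d : ℕ) (ρ : SchwartzMap (EuclideanSpace ℝ (Fin d)) ℝ) :
    ∃ C : ℝ, 0 < C ∧ ∀ ε : ℝ, 0 < ε → ε < 1 →
      ∀ η m l : Fin d → ℤ, η ≠ 0 → m ≠ 0 → l ≠ 0 →
        znorm (η + l) * znorm η *
          |ρ (ε • toE (η + m + l)) - ρ (ε • toE (η + l)) - ρ (ε • toE (η + m)) +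
            ρ (ε • toE η)| ≤ C * znorm m ^ 3 * znorm l ^ 3 := by
  obtain ⟨K0, hK0, hK0'⟩ := ρ.decay 0 2
  obtain ⟨K1, hK1, hK1'⟩ := ρ.decay 1 2
  obtain ⟨K2, hK2, hK2'⟩ := ρ.decay 2 2
  refine ⟨K2 + 4*K1 + 4*K0, by positivity, ?_⟩
  intro ε hε hε1 η m l hη hm hl
  have hzm := one_le_znorm hm
  have hzl := one_le_znorm hl
  have hzη := one_le_znorm hη
  by_cases h0 : znorm (η + l) = 0
  · rw [h0, zero_mul, zero_mul]; positivity
  have hP0 : 0 < znorm (η + l) :=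
    lt_of_le_of_ne (Real.sqrt_nonneg _) (Ne.symm h0)
  set a := ε • toE η with ha
  set L := ε • toE l with hLdef
  set Mv := ε • toE m with hMvdef
  have heq1 : ε • toE (η + l) = a + L := by rw [toE_add, smul_add]
  have heq2 : ε • toE (η + m) = a + Mv := by rw [toE_add, smul_add]
  have heq3 : ε • toE (η + m + l) = a + Mv + L := by
    rw [toE_add, toE_add, smul_add, smul_add]
  have hna : ‖a‖ = ε * znorm η := by
    rw [ha, norm_smul, Real.norm_eq_abs, abs_of_pos hε, znorm_eq]
  have hnL : ‖L‖ = ε * znorm l := by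
    rw [hLdef, norm_smul, Real.norm_eq_abs, abs_of_pos hε, znorm_eq]
  have hnMv : ‖Mv‖ = ε * znorm m := by
    rw [hMvdef, norm_smul, Real.norm_eq_abs, abs_of_pos hε, znorm_eq]
  have hnaL : ‖a + L‖ = ε * znorm (η + l) := by
    rw [← heq1, norm_smul, Real.norm_eq_abs, abs_of_pos hε, znorm_eq]
  set P := znorm (η + l) * znorm η with hPdef
  have hPpos : 0 < P := mul_pos hP0 (lt_of_lt_of_le one_pos hzη)
  set A := ‖L‖ + ‖Mv‖ with hAdef
  have hA0 : 0 ≤ A := by positivity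
  set B := K2 + 2*A*K1 + A^2*K0 with hBdef
  have hB0 : 0 < B := by positivity
  set D := B / (ε^2 * P) with hDdef
  -- key pointwise bound
  have key : ∀ w : EuclideanSpace ℝ (Fin d), ‖a‖ ≤ ‖w‖ + A → ‖a + L‖ ≤ ‖w‖ + A →
      ‖iteratedFDeriv ℝ 2 (⇑ρ) w‖ ≤ D := by
    intro w hw1 hw2
    rw [hDdef, le_div_iff₀ (by positivity)]
    set N := ‖iteratedFDeriv ℝ 2 (⇑ρ) w‖ with hN
    have hNn : 0 ≤ N := norm_nonneg _
    have hWn : 0 ≤ ‖w‖ := norm_nonneg _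
    have e1 : ‖a‖ * N ≤ (‖w‖ + A) * N := mul_le_mul_of_nonneg_right hw1 hNn
    have e2 : ‖a + L‖ * (‖a‖ * N) ≤ (‖w‖ + A) * ((‖w‖ + A) * N) :=
      mul_le_mul hw2 e1 (by positivity) (by positivity)
    have e4 : ‖w‖^2 * N ≤ K2 := hK2' w
    have e5 : ‖w‖ * N ≤ K1 := by have := hK1' w; simpa using this
    have e6 : N ≤ K0 := by have := hK0' w; simpa using this
    have e7 : ε^2 * P = ‖a + L‖ * ‖a‖ := by rw [hna, hnaL, hPdef]; ring
    calc N * (ε^2 * P) = ‖a + L‖ * (‖a‖ * N) := by rw [e7]; ring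
      _ ≤ (‖w‖ + A) * ((‖w‖ + A) * N) := e2
      _ = ‖w‖^2 * N + 2*A*(‖w‖*N) + A^2*N := by ring
      _ ≤ K2 + 2*A*K1 + A^2*K0 := by gcongr
      _ = B := hBdef.symm
  -- g and its derivative
  set g : EuclideanSpace ℝ (Fin d) → ℝ := fun x => ρ (x + Mv) - ρ x with hg
  have hgd : ∀ x, HasFDerivAt g (fderiv ℝ (⇑ρ) (x + Mv) - fderiv ℝ (⇑ρ) x) x := by
    intro x
    have h1 : HasFDerivAt (fun x => ρ (x + Mv)) (fderiv ℝ (⇑ρ) (x + Mv)) x := by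
      have h2 := (ρ.differentiable.differentiableAt (x := x + Mv)).hasFDerivAt.comp x
        ((hasFDerivAt_id x).add_const Mv)
      exact h2
    exact h1.sub (ρ.differentiable.differentiableAt).hasFDerivAt
  -- the curry isometry
  have iso : ∀ x, fderiv ℝ (⇑ρ) x
      = continuousMultilinearCurryFin1 ℝ (EuclideanSpace ℝ (Fin d)) ℝ
        (iteratedFDeriv ℝ 1 (⇑ρ) x) := by
    intro x
    ext v
    simp only [continuousMultilinearCurryFin1_apply, iteratedFDeriv_one_apply]
    congr 1
  -- inner bound
  have inner : ∀ y ∈ segment ℝ a (a + L),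
      ‖fderiv ℝ (⇑ρ) (y + Mv) - fderiv ℝ (⇑ρ) y‖ ≤ D * ‖Mv‖ := by
    intro y hy
    rw [segment_eq_image'] at hy
    obtain ⟨s, hs, hyeq⟩ := hy
    have hyeq' : y = a + s • L := by
      rw [← hyeq]
      simp only [add_sub_cancel_left]
    have hsmooth : ContDiff ℝ (⊤ : ℕ∞) (⇑ρ) := ρ.smooth ⊤
    have hF1diff : Differentiable ℝ (iteratedFDeriv ℝ 1 (⇑ρ)) :=
      hsmooth.differentiable_iteratedFDeriv (by exact_mod_cast WithTop.coe_lt_top 1)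
    have bound : ∀ w ∈ segment ℝ y (y + Mv),
        ‖fderiv ℝ (iteratedFDeriv ℝ 1 (⇑ρ)) w‖ ≤ D := by
      intro w hw
      rw [norm_fderiv_iteratedFDeriv]
      rw [segment_eq_image'] at hw
      obtain ⟨t, ht, hweq⟩ := hw
      have hweq' : w = a + s • L + t • Mv := by
        rw [← hweq, hyeq']
        simp only [add_sub_cancel_left]
      have hsL : ‖s • L‖ ≤ ‖L‖ := by
        rw [norm_smul, Real.norm_eq_abs, abs_of_nonneg hs.1]
        nlinarith [norm_nonneg L, hs.2]
      have htM : ‖t • Mv‖ ≤ ‖Mv‖ := by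
        rw [norm_smul, Real.norm_eq_abs, abs_of_nonneg ht.1]
        nlinarith [norm_nonneg Mv, ht.2]
      have h1s : ‖(1 - s) • L‖ ≤ ‖L‖ := by
        rw [norm_smul, Real.norm_eq_abs, abs_of_nonneg (by linarith [hs.2])]
        nlinarith [norm_nonneg L, hs.1]
      apply key
      · have d1 : a - w = -(s • L) - t • Mv := by rw [hweq']; abel
        have d2 : ‖a - w‖ ≤ A := by
          rw [d1, hAdef]
          calc ‖-(s • L) - t • Mv‖ ≤ ‖-(s • L)‖ + ‖t • Mv‖ := norm_sub_le _ _
            _ = ‖s • L‖ + ‖t • Mv‖ := by rw [norm_neg]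
            _ ≤ ‖L‖ + ‖Mv‖ := add_le_add hsL htM
        calc ‖a‖ = ‖w + (a - w)‖ := by congr 1; abel
          _ ≤ ‖w‖ + ‖a - w‖ := norm_add_le _ _
          _ ≤ ‖w‖ + A := by linarith
      · have d1 : a + L - w = (1 - s) • L - t • Mv := by
          rw [hweq', sub_smul, one_smul]; abel
        have d2 : ‖a + L - w‖ ≤ A := by
          rw [d1, hAdef]
          calc ‖(1 - s) • L - t • Mv‖ ≤ ‖(1 - s) • L‖ + ‖t • Mv‖ := norm_sub_le _ _
            _ ≤ ‖L‖ + ‖Mv‖ := add_le_add h1s htM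
        calc ‖a + L‖ = ‖w + (a + L - w)‖ := by congr 1; abel
          _ ≤ ‖w‖ + ‖a + L - w‖ := norm_add_le _ _
          _ ≤ ‖w‖ + A := by linarith
    have mvt := (convex_segment y (y + Mv)).norm_image_sub_le_of_norm_fderiv_le
      (fun w _ => hF1diff w) bound
      (left_mem_segment ℝ y (y + Mv)) (right_mem_segment ℝ y (y + Mv))
    rw [add_sub_cancel_left] at mvt
    calc ‖fderiv ℝ (⇑ρ) (y + Mv) - fderiv ℝ (⇑ρ) y‖
        = ‖iteratedFDeriv ℝ 1 (⇑ρ) (y + Mv) - iteratedFDeriv ℝ 1 (⇑ρ) y‖ := by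
          rw [iso, iso, ← map_sub]
          exact (continuousMultilinearCurryFin1 ℝ (EuclideanSpace ℝ (Fin d)) ℝ).norm_map _
      _ ≤ D * ‖Mv‖ := mvt
  -- outer MVT
  have outer := (convex_segment a (a + L)).norm_image_sub_le_of_norm_fderiv_le
    (f := g) (C := D * ‖Mv‖)
    (fun y _ => (hgd y).differentiableAt)
    (fun y hy => by rw [(hgd y).fderiv]; exact inner y hy)
    (left_mem_segment ℝ a (a + L)) (right_mem_segment ℝ a (a + L))
  rw [add_sub_cancel_left] at outer
  have hΨ : ρ (ε • toE (η + m + l)) - ρ (ε • toE (η + l)) - ρ (ε • toE (η + m))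
      + ρ (ε • toE η) = g (a + L) - g a := by
    rw [heq1, heq2, heq3, hg]
    have hc : a + Mv + L = a + L + Mv := by abel
    rw [hc]; ring
  rw [hΨ]
  have habs : |g (a + L) - g a| ≤ D * ‖Mv‖ * ‖L‖ := by
    rw [← Real.norm_eq_abs]; exact outer
  have step1 : P * |g (a + L) - g a| ≤ B * znorm m * znorm l := by
    have heq : P * (D * ‖Mv‖ * ‖L‖) = B * znorm m * znorm l := by
      rw [hDdef, hnMv, hnL]
      field_simp
    calc P * |g (a + L) - g a| ≤ P * (D * ‖Mv‖ * ‖L‖) :=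
          mul_le_mul_of_nonneg_left habs hPpos.le
      _ = B * znorm m * znorm l := heq
  have hAle : A ≤ 2 * (znorm m * znorm l) := by
    rw [hAdef, hnL, hnMv]
    nlinarith
  set u := znorm m * znorm l with hu
  have hu1 : 1 ≤ u := by nlinarith
  have hu0 : 0 < u := lt_of_lt_of_le one_pos hu1
  have hu2 : u^2 ≤ u^3 := by nlinarith
  have hu3 : u ≤ u^3 := by nlinarith
  have step2 : B * znorm m * znorm l ≤ (K2 + 4*K1 + 4*K0) * znorm m ^ 3 * znorm l ^ 3 := by
    have t1 : K2 * u ≤ K2 * u^3 := mul_le_mul_of_nonneg_left hu3 hK2.le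
    have t2 : 2*A*K1*u ≤ 4*K1*u^3 := by nlinarith [mul_le_mul_of_nonneg_right hAle hu0.le]
    have hA2 : A^2 ≤ 4*u^2 := by nlinarith
    have t3 : A^2*K0*u ≤ 4*K0*u^3 := by
      nlinarith [mul_le_mul_of_nonneg_right hA2 (mul_nonneg hK0.le hu0.le)]
    calc B * znorm m * znorm l = K2 * u + 2*A*K1*u + A^2*K0*u := by rw [hBdef, hu]; ring
      _ ≤ K2 * u^3 + 4*K1*u^3 + 4*K0*u^3 := by linarith
      _ = (K2 + 4*K1 + 4*K0) * znorm m ^ 3 * znorm l ^ 3 := by rw [hu]; ring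
  calc znorm (η + l) * znorm η * |g (a + L) - g a| = P * |g (a + L) - g a| := by rw [hPdef]
    _ ≤ B * znorm m * znorm l := step1
    _ ≤ _ := step2
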